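/- Let N be a labelled Petri net, f ∈ Σ_F a fault, and V_f its verifier. Then f is not diagnosable in N if and only if V_f has an infinite trace containing an occurrence of the first-replica copy f¹ of the fault f. -/

import Mathlib

/-! Labelled Petri nets -/

structure PetriNet (P : Type*) (T : Type*) (Λ : Type*) where
  flowPT : P → T → Prop
  flowTP : T → P → Prop
  label : T → Λ
  init : Set P

namespace PetriNet

variable {P T Λ : Type*}

def preset (N : PetriNet P T Λ) (t : T) : Set P := {p | N.flowPT p t}

def postset (N : PetriNet P T Λ) (t : T) : Set P := {p | N.flowTP t p}

def fire (N : PetriNet P T Λ) (M : Set P) (t : T) : Set P := (M \ N.preset t) ∪ N.postset t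

/-- An (infinite) run of a Petri net. -/
structure Run (N : PetriNet P T Λ) where
  marking : ℕ → Set P
  trans : ℕ → T
  h0 : marking 0 = N.init
  henabled : ∀ k, N.preset (trans k) ⊆ marking k
  hstep : ∀ k, marking (k + 1) = N.fire (marking k) (trans k)

/-- The trace of a run: the infinite word of labels of the fired transitions. -/
def Run.trace {N : PetriNet P T Λ} (r : Run N) : ℕ → Λ := fun k => N.label (r.trans k)

/-- The set of infinite traces of a Petri net. -/
def InfTraces (N : PetriNet P T Λ) : Set (ℕ → Λ) := {σ | ∃ r : Run N, r.trace = σ}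

/-- Reachable markings. -/
inductive ReachM (N : PetriNet P T Λ) : Set P → Prop
  | init : ReachM N N.init
  | step (M : Set P) (t : T) : ReachM N M → N.preset t ⊆ M → ReachM N (N.fire M t)

/-- A net is live if every reachable marking enables some transition. -/
def Live (N : PetriNet P T Λ) : Prop := ∀ M, N.ReachM M → ∃ t, N.preset t ⊆ M

/-- `FireSeq N M l M'`: the finite sequence `l` of transitions can fire from `M`, yielding `M'`. -/
inductive FireSeq (N : PetriNet P T Λ) : Set P → List T → Set P → Prop
  | nil (M : Set P) : FireSeq N M [] M
  | cons (M : Set P) (t : T) (l : List T) (M' : Set P) :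
      N.preset t ⊆ M → FireSeq N (N.fire M t) l M' → FireSeq N M (t :: l) M'

/-- The net has no cycle of unobservable transitions. -/
def NoUnobsCycle (N : PetriNet P T Λ) (Obs : Set Λ) : Prop :=
  ¬ ∃ (M : Set P) (l : List T), N.ReachM M ∧ l ≠ [] ∧ (∀ t ∈ l, N.label t ∉ Obs) ∧
      N.FireSeq M l M

end PetriNet

/-! Finite-or-infinite words as `ℕ → Option Λ`, observable projection via filtering. -/

/-- View an infinite word as a (possibly finite) word. -/
def injWord {Λ : Type*} (σ : ℕ → Λ) : ℕ → Option Λ := fun n => some (σ n)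

open scoped Classical in
/-- Erase from the word `w` all letters not in `S`, i.e. keep the subsequence of letters
belonging to `S` (the result is `none` from some point on if only finitely many remain). -/
noncomputable def filterWord {Λ : Type*} (S : Set Λ) (w : ℕ → Option Λ) : ℕ → Option Λ :=
  fun n =>
    if {k | ∃ a ∈ S, w k = some a}.Infinite ∨ n < {k | ∃ a ∈ S, w k = some a}.ncard then
      w (Nat.nth (fun k => ∃ a ∈ S, w k = some a) n)
    else none

/-- Observable projection of a (possibly finite) word. -/
noncomputable def obsWord {Λ : Type*} (Obs : Set Λ) (w : ℕ → Option Λ) : ℕ → Option Λ :=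
  filterWord Obs w

/-- Observable projection of an infinite word. -/
noncomputable def obsInf {Λ : Type*} (Obs : Set Λ) (σ : ℕ → Λ) : ℕ → Option Λ :=
  filterWord Obs (injWord σ)

/-- The letter `f` occurs in the infinite word `σ`. -/
def occursInf {Λ : Type*} (f : Λ) (σ : ℕ → Λ) : Prop := ∃ k, σ k = f

/-- The letter `f` occurs in the (possibly finite) word `w`. -/
def occursWord {Λ : Type*} (f : Λ) (w : ℕ → Option Λ) : Prop := ∃ k, w k = some f

namespace PetriNet

variable {P T Λ : Type*}

/-- The fault `f` is diagnosable in the net `N`. -/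
def FaultDiagnosable (Obs : Set Λ) (N : PetriNet P T Λ) (f : Λ) : Prop :=
  ∀ σ ∈ N.InfTraces, ∀ α ∈ N.InfTraces,
    obsInf Obs σ = obsInf Obs α → occursInf f σ → occursInf f α

/-- The net `N` is diagnosable: every fault of `Flt` is diagnosable in it. -/
def Diagnosable (Obs Flt : Set Λ) (N : PetriNet P T Λ) : Prop :=
  ∀ f ∈ Flt, N.FaultDiagnosable Obs f

/-- The `f`-fault-free version of a net: all transitions labelled `f` are deleted. -/
def faultFree (N : PetriNet P T Λ) (f : Λ) : PetriNet P {t : T // N.label t ≠ f} Λ where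
  flowPT p t := N.flowPT p t.1
  flowTP t p := N.flowTP t.1 p
  label t := N.label t.1
  init := N.init

end PetriNet

/-! Components: deterministic automata with a given alphabet. -/

structure Component (Q : Type*) (Λ : Type*) where
  alph : Set Λ
  delta : Q → Λ → Option Q
  start : Q
  dom : ∀ q a q', delta q a = some q' → a ∈ alph

namespace Component

variable {Q Λ : Type*}

/-- The infinite traces of a component: words labelling infinite paths from the initial state. -/
def InfTraces (C : Component Q Λ) : Set (ℕ → Λ) :=
  {σ | ∃ π : ℕ → Q, π 0 = C.start ∧ ∀ k, C.delta (π k) (σ k) = some (π (k + 1))}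

inductive Reach (C : Component Q Λ) : Q → Prop
  | start : Reach C C.start
  | step (q : Q) (a : Λ) (q' : Q) : Reach C q → C.delta q a = some q' → Reach C q'

/-- A component is live if every reachable state enables some action. -/
def Live (C : Component Q Λ) : Prop := ∀ q, C.Reach q → ∃ a q', C.delta q a = some q'

/-- Extension of the transition function to finite words. -/
def deltaStar (C : Component Q Λ) : Q → List Λ → Option Q
  | q, [] => some q
  | q, a :: l =>
    match C.delta q a with
    | some q' => C.deltaStar q' l
    | none => none

/-- The component has no cycle of unobservable actions. -/
def NoUnobsCycle (C : Component Q Λ) (Obs : Set Λ) : Prop :=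
  ¬ ∃ (q : Q) (l : List Λ), C.Reach q ∧ l ≠ [] ∧ (∀ a ∈ l, a ∉ Obs) ∧
      C.deltaStar q l = some q

/-- The fault `f` is diagnosable in the component `C`. -/
def FaultDiagnosable (Obs : Set Λ) (C : Component Q Λ) (f : Λ) : Prop :=
  ∀ σ ∈ C.InfTraces, ∀ α ∈ C.InfTraces,
    obsInf Obs σ = obsInf Obs α → occursInf f σ → occursInf f α

/-- The component `C` is diagnosable: every fault of `Flt` is diagnosable in it. -/
def Diagnosable (Obs Flt : Set Λ) (C : Component Q Λ) : Prop :=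
  ∀ f ∈ Flt, C.FaultDiagnosable Obs f

/-- The transitions of a component, as triples `(q, a, q')` with `δ q a = q'`. -/
def Trans (C : Component Q Λ) : Type _ :=
  {x : Q × Λ × Q // C.delta x.1 x.2.1 = some x.2.2}

/-- The labelled Petri net corresponding to a component. -/
def toNet (C : Component Q Λ) : PetriNet Q C.Trans Λ where
  flowPT p t := p = t.1.1
  flowTP t p := p = t.1.2.2
  label t := t.1.2.1
  init := {C.start}

end Component

/-! Labelled Petri nets equipped with an alphabet, and their product. -/

structure ANet (P : Type*) (T : Type*) (Λ : Type*) where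
  net : PetriNet P T Λ
  alph : Set Λ
  labmem : ∀ t, net.label t ∈ alph

/-- The net of a component, equipped with the component's alphabet. -/
def Component.toANet {Q Λ : Type*} (C : Component Q Λ) : ANet Q C.Trans Λ :=
  ⟨C.toNet, C.alph, fun t => C.dom t.1.1 t.1.2.1 t.1.2.2 t.2⟩

/-- A synchronized transition of the product of the nets `Ns`: a label together with a choice
of one transition with that label from every component net whose alphabet contains the label
(components whose alphabet does not contain the label do not participate). -/
structure SyncTrans {ι : Type*} {P T : ι → Type*} {Λ : Type*} (Ns : ∀ i, ANet (P i) (T i) Λ) where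
  lab : Λ
  choice : ∀ i, Option (T i)
  used : ∃ i, lab ∈ (Ns i).alph
  sync : ∀ i, lab ∈ (Ns i).alph → ∃ t, choice i = some t ∧ (Ns i).net.label t = lab
  not_mem : ∀ i, lab ∉ (Ns i).alph → choice i = none

/-- The product of labelled Petri nets, synchronizing on shared actions. -/
def ANet.prod {ι : Type*} {P T : ι → Type*} {Λ : Type*} (Ns : ∀ i, ANet (P i) (T i) Λ) :
    PetriNet (Σ i, P i) (SyncTrans Ns) Λ where
  flowPT p t := ∃ u, t.choice p.1 = some u ∧ (Ns p.1).net.flowPT p.2 u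
  flowTP t p := ∃ u, t.choice p.1 = some u ∧ (Ns p.1).net.flowTP u p.2
  label t := t.lab
  init := {p | p.2 ∈ (Ns p.1).net.init}

/-- `IsProjOf Ns i σ w`: the word `w` is the projection on component `i` of the infinite
trace `σ` of the product net, i.e. there is a run of the product net with trace `σ` whose
projection on component `i` (keeping exactly the transitions whose label is in the `i`-th
alphabet) has trace `w`. -/
def IsProjOf {ι : Type*} {P T : ι → Type*} {Λ : Type*} (Ns : ∀ i, ANet (P i) (T i) Λ)
    (i : ι) (σ : ℕ → Λ) (w : ℕ → Option Λ) : Prop :=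
  ∃ r : (ANet.prod Ns).Run, r.trace = σ ∧ filterWord (Ns i).alph (injWord σ) = w

/-- The `f`-fault-free version of an alphabet-equipped net. -/
def ANet.faultFree {P T Λ : Type*} (N : ANet P T Λ) (f : Λ) :
    ANet P {t : T // N.net.label t ≠ f} Λ :=
  ⟨N.net.faultFree f, N.alph, fun t => N.labmem t.1⟩

/-- The family of nets used to build `Nⁱ`: component `i` itself together with the
`f`-fault-free versions of all the other components (the subtype condition is trivial
for `j = i` and says "not labelled `f`" for `j ≠ i`). -/
def exceptNet {ι : Type*} {Q : ι → Type*} {Λ : Type*} (C : ∀ j, Component (Q j) Λ)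
    (f : Λ) (i j : ι) :
    ANet (Q j) {t : (C j).Trans // j ≠ i → (C j).toNet.label t ≠ f} Λ where
  net :=
    { flowPT := fun p t => (C j).toNet.flowPT p t.1
      flowTP := fun t p => (C j).toNet.flowTP t.1 p
      label := fun t => (C j).toNet.label t.1
      init := (C j).toNet.init }
  alph := (C j).alph
  labmem := fun t => (C j).dom t.1.1.1 t.1.1.2.1 t.1.1.2.2 t.1.2

/-- The net `Nⁱ`: the product of `N_{A_i}` with the `f`-fault-free versions of all the
other components. -/
def Nhat {ι : Type*} {Q : ι → Type*} {Λ : Type*} (C : ∀ j, Component (Q j) Λ)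
    (f : Λ) (i : ι) :=
  ANet.prod (fun j => exceptNet C f i j)

/-! The product automaton. -/

open scoped Classical in
noncomputable def prodDelta {ι : Type*} {Q : ι → Type*} {Λ : Type*}
    (C : ∀ i, Component (Q i) Λ) (q : ∀ i, Q i) (a : Λ) : Option (∀ i, Q i) :=
  if (∃ i, a ∈ (C i).alph) ∧ ∀ i, a ∈ (C i).alph → (C i).delta (q i) a ≠ none then
    some (fun i => ((C i).delta (q i) a).getD (q i))
  else none

/-- The product automaton `A₁ × ⋯ × A_n`. -/
noncomputable def prodComponent {ι : Type*} {Q : ι → Type*} {Λ : Type*}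
    (C : ∀ i, Component (Q i) Λ) : Component (∀ i, Q i) Λ where
  alph := ⋃ i, (C i).alph
  delta := prodDelta C
  start := fun i => (C i).start
  dom := by
    intro q a q' h
    unfold prodDelta at h
    split_ifs at h with hc
    · exact Set.mem_iUnion.2 hc.1

/-! The verifier. -/

/-- Labels of the verifier: either a common (fused, observable) label, or a label of a
local transition of the first replica (`a¹`, written `.inr (.inl a)`), or of the second
replica (`a²`, written `.inr (.inr a)`). -/
abbrev VerLabel (Λ : Type*) := Λ ⊕ (Λ ⊕ Λ)

/-- Transitions of the verifier: fused pairs of an observable transition of the first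
replica with a same-labelled transition of the second (fault-free) replica, or local
unobservable transitions of the first replica, or local unobservable non-`f` transitions
of the second replica. -/
def VerTrans {P T Λ : Type*} (N : PetriNet P T Λ) (Obs : Set Λ) (f : Λ) : Type _ :=
  {x : T × T // N.label x.1 ∈ Obs ∧ N.label x.2 = N.label x.1 ∧ N.label x.2 ≠ f} ⊕
    ({t : T // N.label t ∉ Obs} ⊕ {t : T // N.label t ∉ Obs ∧ N.label t ≠ f})

/-- The verifier `V_f` of `N` with respect to the fault `f`: two replicas of `N` put
side by side, the `f`-labelled transitions removed from the second replica, and each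
observable transition of the first replica fused with each same-labelled transition of
the second replica. -/
def verifier {P T Λ : Type*} (N : PetriNet P T Λ) (Obs : Set Λ) (f : Λ) :
    PetriNet (P ⊕ P) (VerTrans N Obs f) (VerLabel Λ) where
  flowPT p t :=
    match p, t with
    | .inl p, .inl x => N.flowPT p x.1.1
    | .inr p, .inl x => N.flowPT p x.1.2
    | .inl p, .inr (.inl t) => N.flowPT p t.1
    | .inr p, .inr (.inr t) => N.flowPT p t.1
    | _, _ => False
  flowTP t p :=
    match p, t with
    | .inl p, .inl x => N.flowTP x.1.1 p
    | .inr p, .inl x => N.flowTP x.1.2 p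
    | .inl p, .inr (.inl t) => N.flowTP t.1 p
    | .inr p, .inr (.inr t) => N.flowTP t.1 p
    | _, _ => False
  label t :=
    match t with
    | .inl x => Sum.inl (N.label x.1.1)
    | .inr (.inl t) => Sum.inr (Sum.inl (N.label t))
    | .inr (.inr t) => Sum.inr (Sum.inr (N.label t))
  init := Sum.inl '' N.init ∪ Sum.inr '' N.init


open scoped Classical

section CountAux

variable (p : ℕ → Prop)

/-- The "definedness" condition appearing in `filterWord`. -/
def CondW (n : ℕ) : Prop := (setOf p).Infinite ∨ n < (setOf p).ncard

theorem condW_iff {p : ℕ → Prop} {n : ℕ} :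
    CondW p n ↔ ∀ hf : (setOf p).Finite, n < hf.toFinset.card := by
  constructor
  · rintro (h | h) hf
    · exact absurd hf h
    · rwa [Set.ncard_eq_toFinset_card _ hf] at h
  · intro h
    rcases (setOf p).finite_or_infinite with hf | hf
    · exact Or.inr (by rw [Set.ncard_eq_toFinset_card _ hf]; exact h hf)
    · exact Or.inl hf

theorem condW_of_count {p : ℕ → Prop} {i n : ℕ} (hp : p i) (hc : Nat.count p i = n) :
    CondW p n := by
  rw [condW_iff]
  intro hf
  have h1 : Nat.count p (i + 1) = n + 1 := by
    rw [Nat.count_succ, hc, if_pos hp]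
  have := Nat.count_le_card hf (i + 1)
  rw [h1] at this
  exact this

theorem nth_spec_of_condW {p : ℕ → Prop} {n : ℕ} (h : CondW p n) :
    p (Nat.nth p n) ∧ Nat.count p (Nat.nth p n) = n :=
  ⟨Nat.nth_mem n (fun hf => condW_iff.1 h hf), Nat.count_nth (fun hf => condW_iff.1 h hf)⟩

theorem filterWord_eq {Λ : Type*} (Obs : Set Λ) (σ : ℕ → Λ) (n : ℕ) :
    filterWord Obs (injWord σ) n =
      if CondW (fun k => σ k ∈ Obs) n then some (σ (Nat.nth (fun k => σ k ∈ Obs) n))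
      else none := by
  have hfun : (fun k => ∃ a ∈ Obs, injWord σ k = some a) = (fun k => σ k ∈ Obs) := by
    funext k
    simp only [injWord, Option.some.injEq, eq_iff_iff]
    constructor
    · rintro ⟨a, ha, rfl⟩; exact ha
    · intro h; exact ⟨σ k, h, rfl⟩
  rw [filterWord]
  rw [show {k | ∃ a ∈ Obs, injWord σ k = some a} = {k | σ k ∈ Obs} from congrArg setOf hfun,
    hfun]
  by_cases h : ({k | σ k ∈ Obs} : Set ℕ).Infinite ∨ n < ({k | σ k ∈ Obs} : Set ℕ).ncard
  · rw [if_pos h, if_pos (show CondW (fun k => σ k ∈ Obs) n from h)]; rfl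
  · rw [if_neg h, if_neg (show ¬ CondW (fun k => σ k ∈ Obs) n from h)]

/-- Transfer of `Nat.count` along a strictly monotone reindexing. -/
theorem count_transfer {p q : ℕ → Prop} {g : ℕ → ℕ} (hg : StrictMono g)
    (hiff : ∀ j, p j ↔ q (g j)) (hsub : ∀ k, q k → ∃ j, g j = k) (j : ℕ) :
    Nat.count q (g j) = Nat.count p j := by
  rw [Nat.count_eq_card_filter_range, Nat.count_eq_card_filter_range]
  have himg : (Finset.range (g j)).filter q = ((Finset.range j).filter p).image g := by
    ext k
    simp only [Finset.mem_filter, Finset.mem_range, Finset.mem_image]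
    constructor
    · rintro ⟨hk, hq⟩
      obtain ⟨j', rfl⟩ := hsub k hq
      exact ⟨j', ⟨hg.lt_iff_lt.1 hk, (hiff j').2 hq⟩, rfl⟩
    · rintro ⟨j', ⟨hj', hp⟩, rfl⟩
      exact ⟨hg.lt_iff_lt.2 hj', (hiff j').1 hp⟩
  rw [himg, Finset.card_image_of_injective _ hg.injective]

theorem setOf_transfer {p q : ℕ → Prop} {g : ℕ → ℕ}
    (hiff : ∀ j, p j ↔ q (g j)) (hsub : ∀ k, q k → ∃ j, g j = k) :
    setOf q = g '' setOf p := by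
  ext k
  constructor
  · intro hq
    obtain ⟨j, rfl⟩ := hsub k hq
    exact ⟨j, (hiff j).2 hq, rfl⟩
  · rintro ⟨j, hp, rfl⟩
    exact (hiff j).1 hp

theorem nth_transfer {p q : ℕ → Prop} {g : ℕ → ℕ} (hg : StrictMono g)
    (hiff : ∀ j, p j ↔ q (g j)) (hsub : ∀ k, q k → ∃ j, g j = k) {n : ℕ}
    (hc : CondW q n) : g (Nat.nth p n) = Nat.nth q n := by
  obtain ⟨hq, hcount⟩ := nth_spec_of_condW hc
  obtain ⟨j, hj⟩ := hsub _ hq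
  rw [← hj] at hq hcount
  have hcp : Nat.count p j = n := by rw [← count_transfer hg hiff hsub j]; exact hcount
  have : Nat.nth p n = j := by rw [← hcp]; exact Nat.nth_count ((hiff j).2 hq)
  rw [this, hj]

theorem condW_transfer {p q : ℕ → Prop} {g : ℕ → ℕ} (hg : StrictMono g)
    (hiff : ∀ j, p j ↔ q (g j)) (hsub : ∀ k, q k → ∃ j, g j = k) {n : ℕ} :
    CondW q n ↔ CondW p n := by
  have hs := setOf_transfer hiff hsub
  have hinf : (setOf q).Infinite ↔ (setOf p).Infinite := by
    rw [hs]
    constructor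
    · exact fun h => h.of_image g
    · exact fun h => h.image (hg.injective.injOn)
  have hcard : (setOf q).ncard = (setOf p).ncard := by
    rw [hs, Set.ncard_image_of_injective _ hg.injective]
  unfold CondW
  rw [hinf, hcard]

end CountAux

section VerifierAux

variable {P T Λ : Type*} {N : PetriNet P T Λ} {Obs : Set Λ} {f : Λ}

/-- Left component of a marking of the verifier. -/
def leftM (M : Set (P ⊕ P)) : Set P := {p | Sum.inl p ∈ M}

/-- Right component of a marking of the verifier. -/
def rightM (M : Set (P ⊕ P)) : Set P := {p | Sum.inr p ∈ M}

theorem leftM_union (A B : Set P) : leftM (Sum.inl '' A ∪ Sum.inr '' B) = A := by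
  ext p; simp [leftM]

theorem rightM_union (A B : Set P) : rightM (Sum.inl '' A ∪ Sum.inr '' B) = B := by
  ext p; simp [rightM]

theorem sum_decomp (M : Set (P ⊕ P)) : M = Sum.inl '' leftM M ∪ Sum.inr '' rightM M := by
  ext q
  rcases q with p | p <;> simp [leftM, rightM]

theorem leftM_init : leftM (verifier N Obs f).init = N.init := leftM_union _ _

theorem rightM_init : rightM (verifier N Obs f).init = N.init := rightM_union _ _

theorem ver_preset_fused (x) :
    (verifier N Obs f).preset (Sum.inl x) =
      Sum.inl '' N.preset x.1.1 ∪ Sum.inr '' N.preset x.1.2 := by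
  ext q; rcases q with p | p <;> simp [PetriNet.preset, verifier]

theorem ver_preset_loc1 (u) :
    (verifier N Obs f).preset (Sum.inr (Sum.inl u)) = Sum.inl '' N.preset u.1 := by
  ext q; rcases q with p | p <;> simp [PetriNet.preset, verifier]

theorem ver_preset_loc2 (u) :
    (verifier N Obs f).preset (Sum.inr (Sum.inr u)) = Sum.inr '' N.preset u.1 := by
  ext q; rcases q with p | p <;> simp [PetriNet.preset, verifier]

theorem leftM_fire_fused (M : Set (P ⊕ P)) (x) :
    leftM ((verifier N Obs f).fire M (Sum.inl x)) = N.fire (leftM M) x.1.1 := by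
  ext p
  simp [leftM, PetriNet.fire, PetriNet.preset, PetriNet.postset, verifier]

theorem rightM_fire_fused (M : Set (P ⊕ P)) (x) :
    rightM ((verifier N Obs f).fire M (Sum.inl x)) = N.fire (rightM M) x.1.2 := by
  ext p
  simp [rightM, PetriNet.fire, PetriNet.preset, PetriNet.postset, verifier]

theorem leftM_fire_loc1 (M : Set (P ⊕ P)) (u) :
    leftM ((verifier N Obs f).fire M (Sum.inr (Sum.inl u))) = N.fire (leftM M) u.1 := by
  ext p
  simp [leftM, PetriNet.fire, PetriNet.preset, PetriNet.postset, verifier]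

theorem rightM_fire_loc1 (M : Set (P ⊕ P)) (u) :
    rightM ((verifier N Obs f).fire M (Sum.inr (Sum.inl u))) = rightM M := by
  ext p
  simp [rightM, PetriNet.fire, PetriNet.preset, PetriNet.postset, verifier]

theorem leftM_fire_loc2 (M : Set (P ⊕ P)) (u) :
    leftM ((verifier N Obs f).fire M (Sum.inr (Sum.inr u))) = leftM M := by
  ext p
  simp [leftM, PetriNet.fire, PetriNet.preset, PetriNet.postset, verifier]

theorem rightM_fire_loc2 (M : Set (P ⊕ P)) (u) :
    rightM ((verifier N Obs f).fire M (Sum.inr (Sum.inr u))) = N.fire (rightM M) u.1 := by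
  ext p
  simp [rightM, PetriNet.fire, PetriNet.preset, PetriNet.postset, verifier]

end VerifierAux

section Pigeonhole

variable {P T Λ : Type*} {Obs : Set Λ} {N : PetriNet P T Λ}

theorem fireSeq_range (m : ℕ → Set P) (u : ℕ → T) {K : ℕ}
    (hen : ∀ k, K ≤ k → N.preset (u k) ⊆ m k)
    (hstep : ∀ k, K ≤ k → m (k + 1) = N.fire (m k) (u k)) :
    ∀ (d s : ℕ), K ≤ s →
      N.FireSeq (m s) ((List.range d).map (fun j => u (s + j))) (m (s + d)) := by
  intro d
  induction d with
  | zero => intro s _; simpa using PetriNet.FireSeq.nil (m s)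
  | succ d ih =>
    intro s hs
    rw [List.range_succ_eq_map]
    have hmap : ((List.range d).map Nat.succ).map (fun j => u (s + j)) =
        (List.range d).map (fun j => u ((s + 1) + j)) := by
      rw [List.map_map]
      apply List.map_congr_left
      intro j _
      simp only [Function.comp_apply]
      congr 1
      omega
    have h1 : m (s + (d + 1)) = m ((s + 1) + d) := congrArg m (by omega)
    rw [List.map_cons, hmap, h1]
    simp only [Nat.add_zero]
    refine PetriNet.FireSeq.cons _ _ _ _ (hen s hs) ?_
    rw [← hstep s hs]
    exact ih (s + 1) (by omega)

theorem reach_range (m : ℕ → Set P) (u : ℕ → T) {K : ℕ}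
    (hreach : N.ReachM (m K))
    (hen : ∀ k, K ≤ k → N.preset (u k) ⊆ m k)
    (hstep : ∀ k, K ≤ k → m (k + 1) = N.fire (m k) (u k)) :
    ∀ k, K ≤ k → N.ReachM (m k) := by
  have key : ∀ d, N.ReachM (m (K + d)) := by
    intro d
    induction d with
    | zero => simpa using hreach
    | succ d ih =>
      have h1 : K + (d + 1) = (K + d) + 1 := by omega
      rw [h1, hstep (K + d) (by omega)]
      exact PetriNet.ReachM.step _ _ ih (hen (K + d) (by omega))
  intro k hk
  have : k = K + (k - K) := by omega
  rw [this]
  exact key _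

theorem no_unobs_tail [Finite P] (hcyc : N.NoUnobsCycle Obs)
    (m : ℕ → Set P) (u : ℕ → T) (K : ℕ)
    (hreach : N.ReachM (m K))
    (hen : ∀ k, K ≤ k → N.preset (u k) ⊆ m k)
    (hstep : ∀ k, K ≤ k → m (k + 1) = N.fire (m k) (u k))
    (hlab : ∀ k, K ≤ k → N.label (u k) ∉ Obs) : False := by
  obtain ⟨a, b, hab, heq⟩ :=
    Finite.exists_ne_map_eq_of_infinite (fun d : ℕ => m (K + d))
  wlog hlt : a < b generalizing a b
  · exact this b a (Ne.symm hab) heq.symm (by omega)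
  apply hcyc
  refine ⟨m (K + a), (List.range (b - a)).map (fun j => u (K + a + j)), ?_, ?_, ?_, ?_⟩
  · exact reach_range m u hreach hen hstep _ (by omega)
  · simp only [ne_eq, List.map_eq_nil_iff, List.range_eq_nil]
    omega
  · intro t ht
    simp only [List.mem_map, List.mem_range] at ht
    obtain ⟨j, _, rfl⟩ := ht
    exact hlab _ (by omega)
  · have := fireSeq_range m u hen hstep (b - a) (K + a) (by omega)
    have h1 : K + a + (b - a) = K + b := by omega
    rw [h1, ← heq] at this
    exact this

end Pigeonhole

theorem counter_hits (c : ℕ → ℕ) (h0 : c 0 = 0) (hstep : ∀ m, c (m + 1) ≤ c m + 1)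
    (hub : ∀ K, ∃ m, K ≤ c m) (K : ℕ) : ∃ m, c m = K := by
  classical
  have hex : ∃ m, K ≤ c m := hub K
  let m0 := Nat.find hex
  have hm0 : K ≤ c m0 := Nat.find_spec hex
  cases hm : m0 with
  | zero =>
    refine ⟨0, ?_⟩
    rw [hm] at hm0
    omega
  | succ m1 =>
    have hmin : ¬ K ≤ c m1 := Nat.find_min hex (by omega)
    have := hstep m1
    refine ⟨m1 + 1, ?_⟩
    rw [hm] at hm0
    omega

section Sched

variable {Λ : Type*} (Obs : Set Λ) (σ α : ℕ → Λ)

open scoped Classical in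
/-- Greedy scheduler interleaving the runs of `σ` and `α` in the two replicas. -/
noncomputable def sched : ℕ → ℕ × ℕ
  | 0 => (0, 0)
  | m + 1 =>
    let s := sched m
    if σ s.1 ∉ Obs then (s.1 + 1, s.2)
    else if α s.2 ∉ Obs then (s.1, s.2 + 1)
    else (s.1 + 1, s.2 + 1)

theorem sched_zero : sched Obs σ α 0 = (0, 0) := rfl

theorem sched_cases (m : ℕ) :
    (σ (sched Obs σ α m).1 ∉ Obs ∧
      sched Obs σ α (m + 1) = ((sched Obs σ α m).1 + 1, (sched Obs σ α m).2)) ∨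
    (σ (sched Obs σ α m).1 ∈ Obs ∧ α (sched Obs σ α m).2 ∉ Obs ∧
      sched Obs σ α (m + 1) = ((sched Obs σ α m).1, (sched Obs σ α m).2 + 1)) ∨
    (σ (sched Obs σ α m).1 ∈ Obs ∧ α (sched Obs σ α m).2 ∈ Obs ∧
      sched Obs σ α (m + 1) = ((sched Obs σ α m).1 + 1, (sched Obs σ α m).2 + 1)) := by
  by_cases h1 : σ (sched Obs σ α m).1 ∈ Obs
  · by_cases h2 : α (sched Obs σ α m).2 ∈ Obs
    · exact Or.inr (Or.inr ⟨h1, h2, by rw [sched]; simp [h1, h2]⟩)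
    · exact Or.inr (Or.inl ⟨h1, h2, by rw [sched]; simp [h1, h2]⟩)
  · exact Or.inl ⟨h1, by rw [sched]; simp [h1]⟩

theorem sched_count (m : ℕ) :
    Nat.count (fun k => σ k ∈ Obs) (sched Obs σ α m).1 =
      Nat.count (fun k => α k ∈ Obs) (sched Obs σ α m).2 := by
  classical
  induction m with
  | zero => rw [sched_zero]; rfl
  | succ m ih =>
    rcases sched_cases Obs σ α m with ⟨h1, he⟩ | ⟨h1, h2, he⟩ | ⟨h1, h2, he⟩ <;>
      rw [he] <;> simp only [Nat.count_succ] <;>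
      [rw [if_neg h1]; rw [if_neg h2]; rw [if_pos h1, if_pos h2]] <;> omega

theorem sched_i_succ (m : ℕ) :
    (sched Obs σ α m).1 ≤ (sched Obs σ α (m + 1)).1 ∧
      (sched Obs σ α (m + 1)).1 ≤ (sched Obs σ α m).1 + 1 := by
  rcases sched_cases Obs σ α m with ⟨_, he⟩ | ⟨_, _, he⟩ | ⟨_, _, he⟩ <;> rw [he] <;> omega

theorem sched_i_mono : Monotone (fun m => (sched Obs σ α m).1) :=
  monotone_nat_of_le_succ fun m => (sched_i_succ Obs σ α m).1

/-- The matching hypothesis derived from equality of observable projections. -/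
def SchedMatch : Prop :=
  ∀ n, CondW (fun k => σ k ∈ Obs) n →
    CondW (fun k => α k ∈ Obs) n ∧
      σ (Nat.nth (fun k => σ k ∈ Obs) n) = α (Nat.nth (fun k => α k ∈ Obs) n)

theorem sched_fused (hm : SchedMatch Obs σ α) (m : ℕ)
    (h1 : σ (sched Obs σ α m).1 ∈ Obs) (h2 : α (sched Obs σ α m).2 ∈ Obs) :
    σ (sched Obs σ α m).1 = α (sched Obs σ α m).2 := by
  classical
  set i := (sched Obs σ α m).1 with hi
  set j := (sched Obs σ α m).2 with hj
  have hcount : Nat.count (fun k => σ k ∈ Obs) i = Nat.count (fun k => α k ∈ Obs) j :=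
    sched_count Obs σ α m
  have hcσ : CondW (fun k => σ k ∈ Obs) (Nat.count (fun k => σ k ∈ Obs) i) :=
    condW_of_count h1 rfl
  have hni : Nat.nth (fun k => σ k ∈ Obs) (Nat.count (fun k => σ k ∈ Obs) i) = i :=
    Nat.nth_count h1
  have hnj : Nat.nth (fun k => α k ∈ Obs) (Nat.count (fun k => σ k ∈ Obs) i) = j := by
    rw [hcount]; exact Nat.nth_count h2
  have := (hm _ hcσ).2
  rwa [hni, hnj] at this

theorem sched_i_unbounded (hm : SchedMatch Obs σ α) (K : ℕ) :
    ∃ m, K ≤ (sched Obs σ α m).1 := by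
  classical
  induction K with
  | zero => exact ⟨0, Nat.zero_le _⟩
  | succ K ihK =>
    obtain ⟨m, hm0⟩ := ihK
    by_contra hno
    push_neg at hno
    -- the first counter is stuck at `i₀ := (sched m).1` from `m` on
    have hstuck : ∀ m', m ≤ m' → (sched Obs σ α m').1 = (sched Obs σ α m).1 := by
      intro m' hm'
      have h1 := sched_i_mono Obs σ α hm'
      have h2 := hno m'
      have h3 := hno m
      simp only at h1 h2 h3 ⊢
      omega
    -- every step from `m` on is an `α`-local step
    have hstep : ∀ m', m ≤ m' →
        σ (sched Obs σ α m').1 ∈ Obs ∧ α (sched Obs σ α m').2 ∉ Obs ∧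
          (sched Obs σ α (m' + 1)).2 = (sched Obs σ α m').2 + 1 := by
      intro m' hm'
      rcases sched_cases Obs σ α m' with ⟨h1, he⟩ | ⟨h1, h2, he⟩ | ⟨h1, h2, he⟩
      · exfalso
        have := hstuck m' hm'
        have := hstuck (m' + 1) (by omega)
        rw [he] at this
        simp only at this
        omega
      · exact ⟨h1, h2, by rw [he]⟩
      · exfalso
        have := hstuck m' hm'
        have := hstuck (m' + 1) (by omega)
        rw [he] at this
        simp only at this
        omega
    have hcj : ∀ d, (sched Obs σ α (m + d)).2 = (sched Obs σ α m).2 + d := by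
      intro d
      induction d with
      | zero => rfl
      | succ d ih =>
        have := (hstep (m + d) (by omega)).2.2
        rw [show m + (d + 1) = (m + d) + 1 by omega, this, ih]
        omega
    have hαobs : ∀ j, (sched Obs σ α m).2 ≤ j → α j ∉ Obs := by
      intro j hj
      have := (hstep (m + (j - (sched Obs σ α m).2)) (by omega)).2.1
      rwa [hcj, show (sched Obs σ α m).2 + (j - (sched Obs σ α m).2) = j by omega] at this
    -- derive a contradiction with the matching hypothesis
    have h1 : σ (sched Obs σ α m).1 ∈ Obs := (hstep m le_rfl).1
    set n := Nat.count (fun k => σ k ∈ Obs) (sched Obs σ α m).1 with hn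
    have hcσ : CondW (fun k => σ k ∈ Obs) n := condW_of_count h1 rfl
    have hcα : CondW (fun k => α k ∈ Obs) n := (hm _ hcσ).1
    obtain ⟨hmem, hcnt⟩ := nth_spec_of_condW hcα
    set j := Nat.nth (fun k => α k ∈ Obs) n with hjdef
    have hcountj : Nat.count (fun k => α k ∈ Obs) (sched Obs σ α m).2 = n :=
      (sched_count Obs σ α m).symm
    by_cases hcase : (sched Obs σ α m).2 ≤ j
    · exact hαobs j hcase hmem
    · have hsucc : Nat.count (fun k => α k ∈ Obs) (j + 1) = n + 1 := by
        rw [Nat.count_succ, hcnt, if_pos hmem]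
      have hmono := Nat.count_monotone (fun k => α k ∈ Obs)
        (show j + 1 ≤ (sched Obs σ α m).2 by omega)
      omega

end Sched

section VerTransAux

variable {P T Λ : Type*} {N : PetriNet P T Λ} {Obs : Set Λ} {f : Λ}

/-- First-replica component of a verifier transition (junk value on second-replica-local
transitions). -/
def vt1 : VerTrans N Obs f → T
  | .inl x => x.1.1
  | .inr (.inl u) => u.1
  | .inr (.inr u) => u.1

/-- Second-replica component of a verifier transition. -/
def vt2 : VerTrans N Obs f → T
  | .inl x => x.1.2
  | .inr (.inl u) => u.1
  | .inr (.inr u) => u.1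

/-- The verifier transition involves the first replica. -/
def IsR1 : VerTrans N Obs f → Prop
  | .inr (.inr _) => False
  | _ => True

/-- The verifier transition involves the second replica. -/
def IsR2 : VerTrans N Obs f → Prop
  | .inr (.inl _) => False
  | _ => True

/-- The verifier transition is a fused (observable) one. -/
def IsFused : VerTrans N Obs f → Prop
  | .inl _ => True
  | _ => False

theorem leftM_fire_of_R1 (t : VerTrans N Obs f) (ht : IsR1 t) (M : Set (P ⊕ P)) :
    leftM ((verifier N Obs f).fire M t) = N.fire (leftM M) (vt1 t) := by
  match t with
  | .inl x => exact leftM_fire_fused M x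
  | .inr (.inl u) => exact leftM_fire_loc1 M u
  | .inr (.inr u) => exact ht.elim

theorem leftM_fire_of_not_R1 (t : VerTrans N Obs f) (ht : ¬ IsR1 t) (M : Set (P ⊕ P)) :
    leftM ((verifier N Obs f).fire M t) = leftM M := by
  match t with
  | .inl x => exact absurd trivial ht
  | .inr (.inl u) => exact absurd trivial ht
  | .inr (.inr u) => exact leftM_fire_loc2 M u

theorem rightM_fire_of_R2 (t : VerTrans N Obs f) (ht : IsR2 t) (M : Set (P ⊕ P)) :
    rightM ((verifier N Obs f).fire M t) = N.fire (rightM M) (vt2 t) := by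
  match t with
  | .inl x => exact rightM_fire_fused M x
  | .inr (.inl u) => exact ht.elim
  | .inr (.inr u) => exact rightM_fire_loc2 M u

theorem rightM_fire_of_not_R2 (t : VerTrans N Obs f) (ht : ¬ IsR2 t) (M : Set (P ⊕ P)) :
    rightM ((verifier N Obs f).fire M t) = rightM M := by
  match t with
  | .inl x => exact absurd trivial ht
  | .inr (.inl u) => exact rightM_fire_loc1 M u
  | .inr (.inr u) => exact absurd trivial ht

theorem preset_sub_left (t : VerTrans N Obs f) (ht : IsR1 t) {M : Set (P ⊕ P)}
    (h : (verifier N Obs f).preset t ⊆ M) : N.preset (vt1 t) ⊆ leftM M := by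
  match t with
  | .inl x =>
    intro p hp
    exact h (by rw [ver_preset_fused]; exact Or.inl ⟨p, hp, rfl⟩)
  | .inr (.inl u) =>
    intro p hp
    exact h (by rw [ver_preset_loc1]; exact ⟨p, hp, rfl⟩)
  | .inr (.inr u) => exact ht.elim

theorem preset_sub_right (t : VerTrans N Obs f) (ht : IsR2 t) {M : Set (P ⊕ P)}
    (h : (verifier N Obs f).preset t ⊆ M) : N.preset (vt2 t) ⊆ rightM M := by
  match t with
  | .inl x =>
    intro p hp
    exact h (by rw [ver_preset_fused]; exact Or.inr ⟨p, hp, rfl⟩)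
  | .inr (.inl u) => exact ht.elim
  | .inr (.inr u) =>
    intro p hp
    exact h (by rw [ver_preset_loc2]; exact ⟨p, hp, rfl⟩)

theorem not_R2_lab (t : VerTrans N Obs f) (ht : ¬ IsR2 t) :
    IsR1 t ∧ N.label (vt1 t) ∉ Obs := by
  match t with
  | .inl x => exact absurd trivial ht
  | .inr (.inl u) => exact ⟨trivial, u.2⟩
  | .inr (.inr u) => exact absurd trivial ht

theorem not_R1_lab (t : VerTrans N Obs f) (ht : ¬ IsR1 t) :
    IsR2 t ∧ N.label (vt2 t) ∉ Obs := by
  match t with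
  | .inl x => exact absurd trivial ht
  | .inr (.inl u) => exact absurd trivial ht
  | .inr (.inr u) => exact ⟨trivial, u.2.1⟩

theorem R1_obs_iff (t : VerTrans N Obs f) (ht : IsR1 t) :
    N.label (vt1 t) ∈ Obs ↔ IsFused t := by
  match t with
  | .inl x => exact ⟨fun _ => trivial, fun _ => x.2.1⟩
  | .inr (.inl u) => exact ⟨fun h => absurd h u.2, fun h => h.elim⟩
  | .inr (.inr u) => exact ht.elim

theorem R2_obs_iff (t : VerTrans N Obs f) (ht : IsR2 t) :
    N.label (vt2 t) ∈ Obs ↔ IsFused t := by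
  match t with
  | .inl x => exact ⟨fun _ => trivial, fun _ => x.2.2.1 ▸ x.2.1⟩
  | .inr (.inl u) => exact ht.elim
  | .inr (.inr u) => exact ⟨fun h => absurd h u.2.1, fun h => h.elim⟩

theorem fused_lab (t : VerTrans N Obs f) (ht : IsFused t) :
    N.label (vt2 t) = N.label (vt1 t) ∧ IsR1 t ∧ IsR2 t := by
  match t with
  | .inl x => exact ⟨x.2.2.1, trivial, trivial⟩
  | .inr (.inl u) => exact ht.elim
  | .inr (.inr u) => exact ht.elim

theorem R2_ne_f (t : VerTrans N Obs f) (ht : IsR2 t) : N.label (vt2 t) ≠ f := by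
  match t with
  | .inl x => exact x.2.2.2
  | .inr (.inl u) => exact ht.elim
  | .inr (.inr u) => exact u.2.2

theorem lab_eq_f (t : VerTrans N Obs f)
    (ht : (verifier N Obs f).label t = Sum.inr (Sum.inl f)) :
    IsR1 t ∧ N.label (vt1 t) = f := by
  match t with
  | .inl x => simp [verifier] at ht
  | .inr (.inl u) =>
    refine ⟨trivial, ?_⟩
    simp only [verifier, Sum.inr.injEq, Sum.inl.injEq] at ht
    exact ht
  | .inr (.inr u) => simp [verifier] at ht

end VerTransAux

theorem verifier_of_witness {P T Λ : Type*} {Obs : Set Λ} {N : PetriNet P T Λ} {f : Λ}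
    (hfObs : f ∉ Obs) {σ α : ℕ → Λ} (hσ : σ ∈ N.InfTraces) (hα : α ∈ N.InfTraces)
    (hobs : obsInf Obs σ = obsInf Obs α) (hfσ : occursInf f σ) (hfα : ¬ occursInf f α) :
    ∃ w ∈ (verifier N Obs f).InfTraces, ∃ k, w k = Sum.inr (Sum.inl f) := by
  classical
  obtain ⟨rσ, hrσ⟩ := hσ
  obtain ⟨rα, hrα⟩ := hα
  have hσlab : ∀ k, N.label (rσ.trans k) = σ k := fun k => congrFun hrσ k
  have hαlab : ∀ k, N.label (rα.trans k) = α k := fun k => congrFun hrα k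
  have hfα' : ∀ k, α k ≠ f := fun k hk => hfα ⟨k, hk⟩
  -- the matching property from equality of observable projections
  have hmatch : SchedMatch Obs σ α := by
    intro n hc
    have h := congrFun hobs n
    unfold obsInf at h
    rw [filterWord_eq Obs σ n, filterWord_eq Obs α n] at h
    rw [if_pos hc] at h
    by_cases hc2 : CondW (fun k => α k ∈ Obs) n
    · rw [if_pos hc2] at h
      exact ⟨hc2, Option.some.inj h⟩
    · rw [if_neg hc2] at h
      simp at h
  -- construction of the verifier transitions, step by step
  have spec : ∀ m, ∃ t : VerTrans N Obs f,
      (verifier N Obs f).preset t ⊆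
        (Sum.inl '' rσ.marking ((sched Obs σ α m).1) ∪
          Sum.inr '' rα.marking ((sched Obs σ α m).2)) ∧
      (Sum.inl '' rσ.marking ((sched Obs σ α (m + 1)).1) ∪
          Sum.inr '' rα.marking ((sched Obs σ α (m + 1)).2)) =
        (verifier N Obs f).fire
          (Sum.inl '' rσ.marking ((sched Obs σ α m).1) ∪
            Sum.inr '' rα.marking ((sched Obs σ α m).2)) t ∧
      (σ ((sched Obs σ α m).1) = f →
        (verifier N Obs f).label t = Sum.inr (Sum.inl f)) := by
    intro m
    rcases sched_cases Obs σ α m with ⟨h1, he⟩ | ⟨h1, h2, he⟩ | ⟨h1, h2, he⟩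
    · -- σ-local unobservable step
      refine ⟨Sum.inr (Sum.inl ⟨rσ.trans ((sched Obs σ α m).1), by rw [hσlab]; exact h1⟩),
        ?_, ?_, ?_⟩
      · rw [ver_preset_loc1]
        exact (Set.image_mono (rσ.henabled _)).trans Set.subset_union_left
      · erw [sum_decomp ((verifier N Obs f).fire _ _)]
        rw [leftM_fire_loc1, rightM_fire_loc1,
          leftM_union, rightM_union, he]
        simp only
        rw [rσ.hstep]
      · intro hfe
        show Sum.inr (Sum.inl (N.label (rσ.trans ((sched Obs σ α m).1)))) = _
        rw [hσlab, hfe]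
    · -- α-local unobservable step
      refine ⟨Sum.inr (Sum.inr ⟨rα.trans ((sched Obs σ α m).2),
        ⟨by rw [hαlab]; exact h2, by rw [hαlab]; exact hfα' _⟩⟩), ?_, ?_, ?_⟩
      · rw [ver_preset_loc2]
        exact (Set.image_mono (rα.henabled _)).trans Set.subset_union_right
      · erw [sum_decomp ((verifier N Obs f).fire _ _)]
        rw [leftM_fire_loc2, rightM_fire_loc2,
          leftM_union, rightM_union, he]
        simp only
        rw [rα.hstep]
      · intro hfe
        exact absurd (hfe ▸ h1) hfObs
    · -- fused observable step
      have heq : σ ((sched Obs σ α m).1) = α ((sched Obs σ α m).2) :=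
        sched_fused Obs σ α hmatch m h1 h2
      refine ⟨Sum.inl ⟨(rσ.trans ((sched Obs σ α m).1), rα.trans ((sched Obs σ α m).2)),
        ⟨by rw [hσlab]; exact h1, by rw [hαlab, hσlab]; exact heq.symm,
          by rw [hαlab]; exact hfα' _⟩⟩, ?_, ?_, ?_⟩
      · rw [ver_preset_fused]
        exact Set.union_subset
          ((Set.image_mono (rσ.henabled _)).trans Set.subset_union_left)
          ((Set.image_mono (rα.henabled _)).trans Set.subset_union_right)
      · erw [sum_decomp ((verifier N Obs f).fire _ _)]
        rw [leftM_fire_fused, rightM_fire_fused,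
          leftM_union, rightM_union, he]
        simp only
        rw [rσ.hstep, rα.hstep]
      · intro hfe
        exact absurd (hfe ▸ h1) hfObs
  choose tr htrpre htrfire htrlab using spec
  refine ⟨_, ⟨⟨fun m => Sum.inl '' rσ.marking ((sched Obs σ α m).1) ∪
      Sum.inr '' rα.marking ((sched Obs σ α m).2), tr, ?_, htrpre, htrfire⟩, rfl⟩, ?_⟩
  · simp only [sched_zero]
    rw [rσ.h0, rα.h0]
    rfl
  · obtain ⟨kf, hkf⟩ := hfσ
    obtain ⟨mf, hmf⟩ := counter_hits (fun m => (sched Obs σ α m).1) rfl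
      (fun m => (sched_i_succ Obs σ α m).2) (sched_i_unbounded Obs σ α hmatch) kf
    exact ⟨mf, htrlab mf (by rw [hmf, hkf])⟩

theorem witness_of_verifier {P T Λ : Type*} [Finite P] {Obs : Set Λ} {N : PetriNet P T Λ}
    (hcyc : N.NoUnobsCycle Obs) (f : Λ)
    {w : ℕ → VerLabel Λ} (hw : w ∈ (verifier N Obs f).InfTraces)
    {k₀ : ℕ} (hk₀ : w k₀ = Sum.inr (Sum.inl f)) :
    ∃ σ ∈ N.InfTraces, ∃ α ∈ N.InfTraces,
      obsInf Obs σ = obsInf Obs α ∧ occursInf f σ ∧ ¬ occursInf f α := by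
  classical
  obtain ⟨r, hr⟩ := hw
  -- reachability of both projected markings
  have hreach1 : ∀ k, N.ReachM (leftM (r.marking k)) := by
    intro k
    induction k with
    | zero => rw [r.h0, leftM_init]; exact PetriNet.ReachM.init
    | succ k ih =>
      rw [r.hstep]
      by_cases h : IsR1 (r.trans k)
      · rw [leftM_fire_of_R1 _ h]
        exact PetriNet.ReachM.step _ _ ih (preset_sub_left _ h (r.henabled k))
      · rw [leftM_fire_of_not_R1 _ h]; exact ih
  have hreach2 : ∀ k, N.ReachM (rightM (r.marking k)) := by
    intro k
    induction k with
    | zero => rw [r.h0, rightM_init]; exact PetriNet.ReachM.init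
    | succ k ih =>
      rw [r.hstep]
      by_cases h : IsR2 (r.trans k)
      · rw [rightM_fire_of_R2 _ h]
        exact PetriNet.ReachM.step _ _ ih (preset_sub_right _ h (r.henabled k))
      · rw [rightM_fire_of_not_R2 _ h]; exact ih
  -- infinitely many transitions of each replica
  have hS1 : (setOf (fun k => IsR1 (r.trans k))).Infinite := by
    by_contra hfin
    rw [Set.not_infinite] at hfin
    obtain ⟨K, hK⟩ := hfin.bddAbove
    have hnot : ∀ k, K + 1 ≤ k → ¬ IsR1 (r.trans k) := by
      intro k hk h
      have := hK h
      omega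
    refine no_unobs_tail hcyc (fun k => rightM (r.marking k)) (fun k => vt2 (r.trans k))
      (K + 1) (hreach2 (K + 1)) ?_ ?_ ?_
    · intro k hk
      exact preset_sub_right _ (not_R1_lab _ (hnot k hk)).1 (r.henabled k)
    · intro k hk
      show rightM (r.marking (k + 1)) = N.fire (rightM (r.marking k)) (vt2 (r.trans k))
      rw [r.hstep]
      exact rightM_fire_of_R2 _ (not_R1_lab _ (hnot k hk)).1 _
    · intro k hk
      exact (not_R1_lab _ (hnot k hk)).2
  have hS2 : (setOf (fun k => IsR2 (r.trans k))).Infinite := by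
    by_contra hfin
    rw [Set.not_infinite] at hfin
    obtain ⟨K, hK⟩ := hfin.bddAbove
    have hnot : ∀ k, K + 1 ≤ k → ¬ IsR2 (r.trans k) := by
      intro k hk h
      have := hK h
      omega
    refine no_unobs_tail hcyc (fun k => leftM (r.marking k)) (fun k => vt1 (r.trans k))
      (K + 1) (hreach1 (K + 1)) ?_ ?_ ?_
    · intro k hk
      exact preset_sub_left _ (not_R2_lab _ (hnot k hk)).1 (r.henabled k)
    · intro k hk
      show leftM (r.marking (k + 1)) = N.fire (leftM (r.marking k)) (vt1 (r.trans k))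
      rw [r.hstep]
      exact leftM_fire_of_R1 _ (not_R2_lab _ (hnot k hk)).1 _
    · intro k hk
      exact (not_R2_lab _ (hnot k hk)).2
  -- constancy of the projected markings outside replica transitions
  have hconst1 : ∀ a b, a ≤ b → (∀ k, a ≤ k → k < b → ¬ IsR1 (r.trans k)) →
      leftM (r.marking b) = leftM (r.marking a) := by
    have key : ∀ d a, (∀ k, a ≤ k → k < a + d → ¬ IsR1 (r.trans k)) →
        leftM (r.marking (a + d)) = leftM (r.marking a) := by
      intro d
      induction d with
      | zero => intro a _; rfl
      | succ d ih =>
        intro a hnone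
        rw [show a + (d + 1) = (a + d) + 1 by omega, r.hstep,
          leftM_fire_of_not_R1 _ (hnone (a + d) (by omega) (by omega))]
        exact ih a (fun k h1 h2 => hnone k h1 (by omega))
    intro a b hab hnone
    have := key (b - a) a (fun k h1 h2 => hnone k h1 (by omega))
    rwa [show a + (b - a) = b by omega] at this
  have hconst2 : ∀ a b, a ≤ b → (∀ k, a ≤ k → k < b → ¬ IsR2 (r.trans k)) →
      rightM (r.marking b) = rightM (r.marking a) := by
    have key : ∀ d a, (∀ k, a ≤ k → k < a + d → ¬ IsR2 (r.trans k)) →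
        rightM (r.marking (a + d)) = rightM (r.marking a) := by
      intro d
      induction d with
      | zero => intro a _; rfl
      | succ d ih =>
        intro a hnone
        rw [show a + (d + 1) = (a + d) + 1 by omega, r.hstep,
          rightM_fire_of_not_R2 _ (hnone (a + d) (by omega) (by omega))]
        exact ih a (fun k h1 h2 => hnone k h1 (by omega))
    intro a b hab hnone
    have := key (b - a) a (fun k h1 h2 => hnone k h1 (by omega))
    rwa [show a + (b - a) = b by omega] at this
  -- enumerations of the replica transitions
  set g1 : ℕ → ℕ := Nat.nth (fun k => IsR1 (r.trans k)) with hg1def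
  set g2 : ℕ → ℕ := Nat.nth (fun k => IsR2 (r.trans k)) with hg2def
  have hg1mono : StrictMono g1 := Nat.nth_strictMono hS1
  have hg2mono : StrictMono g2 := Nat.nth_strictMono hS2
  have hg1mem : ∀ j, IsR1 (r.trans (g1 j)) := fun j => Nat.nth_mem_of_infinite hS1 j
  have hg2mem : ∀ j, IsR2 (r.trans (g2 j)) := fun j => Nat.nth_mem_of_infinite hS2 j
  have hg1sub : ∀ k, IsR1 (r.trans k) → ∃ j, g1 j = k := fun k hk => ⟨_, Nat.nth_count hk⟩
  have hg2sub : ∀ k, IsR2 (r.trans k) → ∃ j, g2 j = k := fun k hk => ⟨_, Nat.nth_count hk⟩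
  -- the two projected runs
  have hσ0 : leftM (r.marking (g1 0)) = N.init := by
    have h2 : leftM (r.marking (g1 0)) = leftM (r.marking 0) := by
      refine hconst1 0 (g1 0) (by omega) ?_
      intro k _ hk2 hS
      obtain ⟨j, hj⟩ := hg1sub k hS
      have : (0 : ℕ) ≤ j := by omega
      have := hg1mono.lt_iff_lt.1 (show g1 j < g1 0 by omega)
      omega
    rw [h2, r.h0, leftM_init]
  have hα0 : rightM (r.marking (g2 0)) = N.init := by
    have h2 : rightM (r.marking (g2 0)) = rightM (r.marking 0) := by
      refine hconst2 0 (g2 0) (by omega) ?_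
      intro k _ hk2 hS
      obtain ⟨j, hj⟩ := hg2sub k hS
      have := hg2mono.lt_iff_lt.1 (show g2 j < g2 0 by omega)
      omega
    rw [h2, r.h0, rightM_init]
  have hσstep : ∀ j, leftM (r.marking (g1 (j + 1))) =
      N.fire (leftM (r.marking (g1 j))) (vt1 (r.trans (g1 j))) := by
    intro j
    have hlt : g1 j < g1 (j + 1) := hg1mono (by omega)
    have h2 : leftM (r.marking (g1 (j + 1))) = leftM (r.marking (g1 j + 1)) := by
      refine hconst1 (g1 j + 1) (g1 (j + 1)) (by omega) ?_
      intro k hk1 hk2 hS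
      obtain ⟨j', hj'⟩ := hg1sub k hS
      have := hg1mono.lt_iff_lt.1 (show g1 j < g1 j' by omega)
      have := hg1mono.lt_iff_lt.1 (show g1 j' < g1 (j + 1) by omega)
      omega
    rw [h2, r.hstep, leftM_fire_of_R1 _ (hg1mem j)]
  have hαstep : ∀ j, rightM (r.marking (g2 (j + 1))) =
      N.fire (rightM (r.marking (g2 j))) (vt2 (r.trans (g2 j))) := by
    intro j
    have hlt : g2 j < g2 (j + 1) := hg2mono (by omega)
    have h2 : rightM (r.marking (g2 (j + 1))) = rightM (r.marking (g2 j + 1)) := by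
      refine hconst2 (g2 j + 1) (g2 (j + 1)) (by omega) ?_
      intro k hk1 hk2 hS
      obtain ⟨j', hj'⟩ := hg2sub k hS
      have := hg2mono.lt_iff_lt.1 (show g2 j < g2 j' by omega)
      have := hg2mono.lt_iff_lt.1 (show g2 j' < g2 (j + 1) by omega)
      omega
    rw [h2, r.hstep, rightM_fire_of_R2 _ (hg2mem j)]
  set σ : ℕ → Λ := fun j => N.label (vt1 (r.trans (g1 j))) with hσdef
  set α : ℕ → Λ := fun j => N.label (vt2 (r.trans (g2 j))) with hαdef
  have hσmem : σ ∈ N.InfTraces :=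
    ⟨⟨fun j => leftM (r.marking (g1 j)), fun j => vt1 (r.trans (g1 j)), hσ0,
      fun j => preset_sub_left _ (hg1mem j) (r.henabled (g1 j)), hσstep⟩, rfl⟩
  have hαmem : α ∈ N.InfTraces :=
    ⟨⟨fun j => rightM (r.marking (g2 j)), fun j => vt2 (r.trans (g2 j)), hα0,
      fun j => preset_sub_right _ (hg2mem j) (r.henabled (g2 j)), hαstep⟩, rfl⟩
  -- equality of observable projections
  have hiff1 : ∀ j, σ j ∈ Obs ↔ IsFused (r.trans (g1 j)) := by
    intro j
    simp only [hσdef]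
    exact R1_obs_iff _ (hg1mem j)
  have hiff2 : ∀ j, α j ∈ Obs ↔ IsFused (r.trans (g2 j)) := by
    intro j
    simp only [hαdef]
    exact R2_obs_iff _ (hg2mem j)
  have hsubF1 : ∀ k, IsFused (r.trans k) → ∃ j, g1 j = k :=
    fun k hk => hg1sub k (fused_lab _ hk).2.1
  have hsubF2 : ∀ k, IsFused (r.trans k) → ∃ j, g2 j = k :=
    fun k hk => hg2sub k (fused_lab _ hk).2.2
  have hobs : obsInf Obs σ = obsInf Obs α := by
    funext n
    unfold obsInf
    rw [filterWord_eq Obs σ n, filterWord_eq Obs α n]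
    have hc1 := condW_transfer hg1mono hiff1 hsubF1 (n := n)
    have hc2 := condW_transfer hg2mono hiff2 hsubF2 (n := n)
    by_cases hcF : CondW (fun k => IsFused (r.trans k)) n
    · rw [if_pos (hc1.1 hcF), if_pos (hc2.1 hcF)]
      have e1 : g1 (Nat.nth (fun k => σ k ∈ Obs) n) =
          Nat.nth (fun k => IsFused (r.trans k)) n :=
        nth_transfer hg1mono hiff1 hsubF1 hcF
      have e2 : g2 (Nat.nth (fun k => α k ∈ Obs) n) =
          Nat.nth (fun k => IsFused (r.trans k)) n :=
        nth_transfer hg2mono hiff2 hsubF2 hcF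
      have hFmem : IsFused (r.trans (Nat.nth (fun k => IsFused (r.trans k)) n)) :=
        (nth_spec_of_condW hcF).1
      simp only [hσdef, hαdef]
      rw [e1, e2, (fused_lab _ hFmem).1]
    · rw [if_neg (fun h => hcF (hc1.2 h)), if_neg (fun h => hcF (hc2.2 h))]
  -- occurrences of the fault
  have hlabf : IsR1 (r.trans k₀) ∧ N.label (vt1 (r.trans k₀)) = f := by
    refine lab_eq_f (r.trans k₀) ?_
    have h1 : (verifier N Obs f).label (r.trans k₀) = w k₀ := congrFun hr k₀
    rw [h1, hk₀]
  have hoccσ : occursInf f σ := by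
    obtain ⟨j₀, hj₀⟩ := hg1sub k₀ hlabf.1
    refine ⟨j₀, ?_⟩
    simp only [hσdef]
    rw [hj₀]
    exact hlabf.2
  have hoccα : ¬ occursInf f α := by
    rintro ⟨j, hj⟩
    simp only [hαdef] at hj
    exact R2_ne_f _ (hg2mem j) hj
  exact ⟨σ, hσmem, α, hαmem, hobs, hoccσ, hoccα⟩

/-- Let `N` be a labelled Petri net (live and without cycles of unobservable
transitions), `f ∈ Σ_F` a fault, and `V_f` its verifier. Then `f` is not diagnosable in `N` if
and only if `V_f` has an infinite trace containing an occurrence of the first-replica copy `f¹`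
of the fault `f`. -/
theorem not_diagnosable_iff_verifier_fault_trace
    {P T Λ : Type*} [Finite P] [Finite T] [Finite Λ]
    (Obs Flt : Set Λ) (hFlt : Flt ⊆ Obsᶜ)
    (N : PetriNet P T Λ) (hlive : N.Live) (hcyc : N.NoUnobsCycle Obs)
    (f : Λ) (hf : f ∈ Flt) :
    ¬ N.FaultDiagnosable Obs f ↔
      ∃ w ∈ (verifier N Obs f).InfTraces, ∃ k, w k = Sum.inr (Sum.inl f) := by
  have hfObs : f ∉ Obs := hFlt hf
  constructor
  · intro hnd
    simp only [PetriNet.FaultDiagnosable] at hnd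
    push_neg at hnd
    obtain ⟨σ, hσ, α, hα, hobs, hfσ, hfα⟩ := hnd
    exact verifier_of_witness hfObs hσ hα hobs hfσ hfα
  · rintro ⟨w, hw, k, hk⟩ hd
    obtain ⟨σ, hσ, α, hα, hobs, hoccσ, hoccα⟩ := witness_of_verifier hcyc f hw hk
    exact hoccα (hd σ hσ α hα hobs hoccσ)
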